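/- If the gradient of F is L-Lipschitz along the segment from b to x, then the error of the m-step right Riemann approximation of the integrated gradient of coordinate j is bounded: |ĨG_j^m(x, b) − IG_j(x, b)| ≤ |x_j − b_j| · L · ‖x − b‖ / (2m). -/

import Mathlib

open MeasureTheory

/-- Error bound for the `m`-step right Riemann approximation of integrated
gradients when the relevant partial derivative is `L`-Lipschitz along the
segment from `b` to `x`. -/
theorem integratedGradients_riemann_error {d : ℕ}
    (F : EuclideanSpace ℝ (Fin d) → ℝ) (hF : ContDiff ℝ 1 F)
    (x b : EuclideanSpace ℝ (Fin d)) (j : Fin d) (L : ℝ) (m : ℕ) (hm : 0 < m)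
    (g : ℝ → ℝ)
    (hg : ∀ α : ℝ, g α = fderiv ℝ F (b + α • (x - b)) (EuclideanSpace.single j 1))
    (hLip : ∀ α β : ℝ, α ∈ Set.Icc (0:ℝ) 1 → β ∈ Set.Icc (0:ℝ) 1 →
      |g α - g β| ≤ L * ‖x - b‖ * |α - β|) :
    |(x j - b j) * ((1 / (m : ℝ)) * ∑ k ∈ Finset.Icc 1 m, g ((k : ℝ) / (m : ℝ)))
        - (x j - b j) * ∫ α in (0:ℝ)..1, g α|
      ≤ |x j - b j| * L * ‖x - b‖ / (2 * m) := by
  have hm' : (0:ℝ) < m := by exact_mod_cast hm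
  set c := L * ‖x - b‖ with hc_def
  have hc : 0 ≤ c := by
    have h := hLip 0 1 (by norm_num) (by norm_num)
    simp at h
    exact le_trans (abs_nonneg _) h
  have hgc : Continuous g := by
    have hg' : g = fun α : ℝ =>
        fderiv ℝ F (b + α • (x - b)) (EuclideanSpace.single j 1) := funext hg
    rw [hg']
    exact ((hF.continuous_fderiv one_ne_zero).comp (by continuity)).clm_apply continuous_const
  have hint : ∀ u v : ℝ, IntervalIntegrable g volume u v := fun u v =>
    hgc.intervalIntegrable u v
  have hsplit : ∑ k ∈ Finset.range m, ∫ α in ((k:ℝ)/m)..(((k:ℝ)+1)/m), g α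
      = ∫ α in (0:ℝ)..1, g α := by
    have h := intervalIntegral.sum_integral_adjacent_intervals
      (a := fun k : ℕ => (k:ℝ)/m) (μ := volume) (f := g) (n := m)
      (fun k _ => hint _ _)
    simp only [Nat.cast_zero, zero_div, div_self hm'.ne'] at h
    rw [← h]
    apply Finset.sum_congr rfl
    intro k _
    push_cast
    ring_nf
  have hsum : ∑ k ∈ Finset.Icc 1 m, g ((k:ℝ)/m)
      = ∑ k ∈ Finset.range m, g (((k:ℝ)+1)/m) := by
    rw [← Finset.Ico_add_one_right_eq_Icc, Finset.sum_Ico_eq_sum_range]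
    try simp only [Nat.add_sub_cancel]
    apply Finset.sum_congr rfl
    intro k _
    push_cast
    ring_nf
  have key : ∀ k, k < m →
      |(1/(m:ℝ)) * g (((k:ℝ)+1)/m) - ∫ α in ((k:ℝ)/m)..(((k:ℝ)+1)/m), g α|
        ≤ c / (2 * (m:ℝ)^2) := by
    intro k hk
    set u := (k:ℝ)/m with hu_def
    set v := ((k:ℝ)+1)/m with hv_def
    have huv : u ≤ v := by
      rw [hu_def, hv_def]
      gcongr
      linarith
    have hvu : v - u = 1/m := by
      rw [hu_def, hv_def]; field_simp; ring
    have hu0 : (0:ℝ) ≤ u := div_nonneg (Nat.cast_nonneg k) hm'.le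
    have hv1 : v ≤ 1 := by
      rw [hv_def, div_le_one hm']
      have : (k:ℝ)+1 ≤ m := by exact_mod_cast hk
      linarith
    have hv0 : (0:ℝ) ≤ v := hu0.trans huv
    have hconst : (1/(m:ℝ)) * g v = ∫ _ in u..v, g v := by
      rw [intervalIntegral.integral_const, smul_eq_mul, hvu]
    rw [hconst, ← intervalIntegral.integral_sub (intervalIntegrable_const) (hint u v)]
    have h1 : |∫ α in u..v, (g v - g α)| ≤ ∫ α in u..v, |g v - g α| := by
      simpa [Real.norm_eq_abs] using
        intervalIntegral.norm_integral_le_integral_norm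
          (f := fun α => g v - g α) (μ := volume) huv
    refine h1.trans ?_
    have hint1 : IntervalIntegrable (fun α => |g v - g α|) volume u v :=
      ((continuous_const.sub hgc).abs).intervalIntegrable u v
    have hint2 : IntervalIntegrable (fun α => c * (v - α)) volume u v :=
      (continuous_const.mul (continuous_const.sub continuous_id)).intervalIntegrable u v
    have h2 : ∫ α in u..v, |g v - g α| ≤ ∫ α in u..v, c * (v - α) := by
      apply intervalIntegral.integral_mono_on huv hint1 hint2
      intro α hα
      have hα01 : α ∈ Set.Icc (0:ℝ) 1 := ⟨hu0.trans hα.1, hα.2.trans hv1⟩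
      have h := hLip v α ⟨hv0, hv1⟩ hα01
      have habs : |v - α| = v - α := abs_of_nonneg (by linarith [hα.2])
      rw [habs] at h
      exact h
    refine h2.trans ?_
    have hcomp : ∫ α in u..v, c * (v - α) = c * ((v-u)*v - (v^2 - u^2)/2) := by
      rw [intervalIntegral.integral_const_mul]
      congr 1
      rw [intervalIntegral.integral_sub intervalIntegrable_const
        (continuous_id'.intervalIntegrable _ _)]
      rw [intervalIntegral.integral_const, integral_id, smul_eq_mul]
    rw [hcomp]
    have : (v-u)*v - (v^2 - u^2)/2 = (v-u)^2/2 := by ring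
    rw [this, hvu]
    exact le_of_eq (by rw [div_pow, one_pow]; ring)
  -- assemble
  have hS : (1 / (m : ℝ)) * ∑ k ∈ Finset.Icc 1 m, g ((k : ℝ) / (m : ℝ))
      = ∑ k ∈ Finset.range m, (1/(m:ℝ)) * g (((k:ℝ)+1)/m) := by
    rw [hsum, Finset.mul_sum]
  have hdiff : (x j - b j) * ((1 / (m : ℝ)) * ∑ k ∈ Finset.Icc 1 m, g ((k : ℝ) / (m : ℝ)))
        - (x j - b j) * ∫ α in (0:ℝ)..1, g α
      = (x j - b j) * ∑ k ∈ Finset.range m,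
          ((1/(m:ℝ)) * g (((k:ℝ)+1)/m) - ∫ α in ((k:ℝ)/m)..(((k:ℝ)+1)/m), g α) := by
    rw [hS, ← hsplit, ← mul_sub, Finset.sum_sub_distrib]
  rw [hdiff, abs_mul]
  have hbound : |∑ k ∈ Finset.range m,
      ((1/(m:ℝ)) * g (((k:ℝ)+1)/m) - ∫ α in ((k:ℝ)/m)..(((k:ℝ)+1)/m), g α)|
      ≤ c / (2 * m) := by
    calc |∑ k ∈ Finset.range m,
        ((1/(m:ℝ)) * g (((k:ℝ)+1)/m) - ∫ α in ((k:ℝ)/m)..(((k:ℝ)+1)/m), g α)|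
        ≤ ∑ k ∈ Finset.range m,
          |(1/(m:ℝ)) * g (((k:ℝ)+1)/m) - ∫ α in ((k:ℝ)/m)..(((k:ℝ)+1)/m), g α| :=
          Finset.abs_sum_le_sum_abs _ _
      _ ≤ ∑ _k ∈ Finset.range m, c / (2 * (m:ℝ)^2) :=
          Finset.sum_le_sum (fun k hk => key k (Finset.mem_range.mp hk))
      _ = m * (c / (2 * (m:ℝ)^2)) := by rw [Finset.sum_const, Finset.card_range]; ring
      _ = c / (2 * m) := by field_simp
  calc |x j - b j| * |∑ k ∈ Finset.range m,
      ((1/(m:ℝ)) * g (((k:ℝ)+1)/m) - ∫ α in ((k:ℝ)/m)..(((k:ℝ)+1)/m), g α)|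
      ≤ |x j - b j| * (c / (2*m)) := by
        apply mul_le_mul_of_nonneg_left hbound (abs_nonneg _)
    _ = |x j - b j| * L * ‖x - b‖ / (2 * m) := by rw [hc_def]; ring
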